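/- For every positive integer m, ∫₀¹ (ln(1+t))^m · ln(1-t)/(1+t) dt = (1/(m+1))·(ln 2)^{m+2} - ζ(2)·(ln 2)^m - Σ_{k=1}^{m} C(m,k)·(-1)^{k+1}·[ Σ_{l=1}^{k} l!·C(k,l)·(ln 2)^{m-l}·Li_{l+2}(1/2) - k!·(ln 2)^{m-k}·ζ(k+2) ]. -/

import Mathlib

open scoped BigOperators Classical

noncomputable section

/-- Polylogarithm `Li_s(x) = Σ_{n ≥ 1} x^n / n^s`. -/
def polylog (s : ℕ) (x : ℝ) : ℝ := ∑' n : ℕ, x ^ (n + 1) / ((n : ℝ) + 1) ^ s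

/-- Riemann zeta value at a natural argument, `ζ(s) = Σ_{n ≥ 1} 1 / n^s`. -/
def rzeta (s : ℕ) : ℝ := ∑' n : ℕ, 1 / ((n : ℝ) + 1) ^ s

/-- Alternating multiple zeta value
`ζ(s₁,…,s_k) = Σ_{n₁ > ⋯ > n_k ≥ 1} ∏_j sgn(s_j)^{n_j} / n_j^{|s_j|}`. -/
def amzv (s : List ℤ) : ℝ :=
  ∑' f : {f : Fin s.length → ℕ // StrictAnti f ∧ ∀ i, 0 < f i},
    ∏ i : Fin s.length,
      (if s.get i < 0 then (-1 : ℝ) else 1) ^ (f.1 i) / ((f.1 i : ℝ)) ^ (s.get i).natAbs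

/-- Alternating multiple zeta star value
`ζ*(s₁,…,s_k) = Σ_{n₁ ≥ ⋯ ≥ n_k ≥ 1} ∏_j sgn(s_j)^{n_j} / n_j^{|s_j|}`. -/
def amzvStar (s : List ℤ) : ℝ :=
  ∑' f : {f : Fin s.length → ℕ // Antitone f ∧ ∀ i, 0 < f i},
    ∏ i : Fin s.length,
      (if s.get i < 0 then (-1 : ℝ) else 1) ^ (f.1 i) / ((f.1 i : ℝ)) ^ (s.get i).natAbs

/-- Multiple harmonic number
`ζ_n(s₁,…,s_k) = Σ_{n ≥ n₁ > ⋯ > n_k ≥ 1} ∏_j sgn(s_j)^{n_j} / n_j^{|s_j|}`. -/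
def mhn (n : ℕ) (s : List ℤ) : ℝ :=
  ∑' f : {f : Fin s.length → ℕ // StrictAnti f ∧ (∀ i, 0 < f i) ∧ ∀ i, f i ≤ n},
    ∏ i : Fin s.length,
      (if s.get i < 0 then (-1 : ℝ) else 1) ^ (f.1 i) / ((f.1 i : ℝ)) ^ (s.get i).natAbs

/-- Multiple polylogarithm
`Li_{s₁,…,s_k}(x) = Σ_{n₁ > ⋯ > n_k ≥ 1} x^{n₁} / (n₁^{s₁} ⋯ n_k^{s_k})`
(note `n₁ = sup of the n_i`). -/
def mpolylog (s : List ℕ) (x : ℝ) : ℝ :=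
  ∑' f : {f : Fin s.length → ℕ // StrictAnti f ∧ ∀ i, 0 < f i},
    x ^ (Finset.univ.sup f.1) / ∏ i : Fin s.length, ((f.1 i : ℝ)) ^ (s.get i)

/-- Weighted sum over weakly increasing chains `1 ≤ k_m ≤ ⋯ ≤ k₁ ≤ n`
of `g(k_m) / (k₁ ⋯ k_m)`, interpreted as `g(n)` if `m = 0`.
Here `f i + 1` encodes `k_{i+1}`. -/
def chainSum (n m : ℕ) (g : ℕ → ℝ) : ℝ :=
  if h : m = 0 then g n
  else
    ∑ f ∈ Finset.univ.filter
        (fun f : Fin m → Fin n => ∀ i j : Fin m, i ≤ j → f j ≤ f i),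
      g ((f ⟨m - 1, Nat.sub_lt (Nat.pos_of_ne_zero h) Nat.one_pos⟩ : ℕ) + 1) /
        ∏ i : Fin m, (((f i : ℕ) : ℝ) + 1)

/-- `I(k) = ∫₀¹ ln(1+x)^k ln(1-x)/(1+x) dx`. -/
def Ik (k : ℕ) : ℝ := ∫ x in (0:ℝ)..1, Real.log (1 + x) ^ k * Real.log (1 - x) / (1 + x)

end

section Aux

open Real intervalIntegral


lemma hasDeriv_aux (n m : ℕ) {t : ℝ} (ht : 0 < 1 + t) :
    HasDerivAt (fun t : ℝ => (1+t)^(n+1) * Real.log (1+t)^(m+1) / ((n:ℝ)+1))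
      ((1+t)^n * Real.log (1+t)^(m+1) + (((m:ℝ)+1)/((n:ℝ)+1)) * ((1+t)^n * Real.log (1+t)^m)) t := by
  have h1 : HasDerivAt (fun t : ℝ => (1+t)^(n+1)) (((n:ℝ)+1) * (1+t)^n) t := by
    have := ((hasDerivAt_id t).const_add 1).fun_pow (n+1)
    simpa [Nat.add_sub_cancel, mul_comm] using this
  have h2 : HasDerivAt (fun t : ℝ => Real.log (1+t)^(m+1)) ((((m:ℝ)+1) * Real.log (1+t)^m) * (1/(1+t))) t := by
    have hl : HasDerivAt (fun t : ℝ => Real.log (1+t)) (1/(1+t)) t := by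
      simpa using (((hasDerivAt_id t).const_add 1).log ht.ne')
    have := (hl.fun_pow (m+1))
    simpa [Nat.add_sub_cancel, mul_comm, mul_assoc] using this
  have := (h1.fun_mul h2).div_const (((n:ℝ)+1))
  refine this.congr_deriv ?_
  have hn : ((n:ℝ)+1) ≠ 0 := by positivity
  field_simp
  ring

lemma cont_aux (n m : ℕ) : ContinuousOn (fun t : ℝ => (1+t)^n * Real.log (1+t)^m) (Set.uIcc 0 1) := by
  apply ContinuousOn.mul (Continuous.continuousOn (by continuity))
  apply ContinuousOn.pow
  apply Real.continuousOn_log.comp (Continuous.continuousOn (by continuity))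
  intro x hx
  rw [Set.uIcc_of_le (by norm_num : (0:ℝ) ≤ 1)] at hx
  simp only [Set.mem_compl_iff, Set.mem_singleton_iff]
  intro h; linarith [hx.1, h]

lemma c_rec (n m : ℕ) :
    ∫ t in (0:ℝ)..1, (1+t)^n * Real.log (1+t)^(m+1)
      = 2^(n+1) * Real.log 2^(m+1) / ((n:ℝ)+1)
        - (((m:ℝ)+1)/((n:ℝ)+1)) * ∫ t in (0:ℝ)..1, (1+t)^n * Real.log (1+t)^m := by
  have key := intervalIntegral.integral_eq_sub_of_hasDerivAt
    (f := fun t : ℝ => (1+t)^(n+1) * Real.log (1+t)^(m+1) / ((n:ℝ)+1))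
    (f' := fun t : ℝ => (1+t)^n * Real.log (1+t)^(m+1)
        + (((m:ℝ)+1)/((n:ℝ)+1)) * ((1+t)^n * Real.log (1+t)^m))
    (a := 0) (b := 1) ?_ ?_
  · rw [intervalIntegral.integral_add (g := fun t => (((m:ℝ)+1)/((n:ℝ)+1)) * ((1+t)^n * Real.log (1+t)^m)) (cont_aux n (m+1)).intervalIntegrable
      ((continuousOn_const.mul (cont_aux n m)).intervalIntegrable),
      intervalIntegral.integral_const_mul] at key
    have : (∫ t in (0:ℝ)..1, (1+t)^n * Real.log (1+t)^(m+1)) =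
      ((1+1:ℝ))^(n+1) * Real.log (1+1)^(m+1)/((n:ℝ)+1) - (1+0:ℝ)^(n+1) * Real.log (1+0)^(m+1)/((n:ℝ)+1)
        - (((m:ℝ)+1)/((n:ℝ)+1)) * ∫ t in (0:ℝ)..1, (1+t)^n * Real.log (1+t)^m := by
      rw [← key]; ring
    norm_num at this
    convert this using 3 <;> norm_num
  · intro t ht
    rw [Set.uIcc_of_le (by norm_num)] at ht
    exact hasDeriv_aux n m (by linarith [ht.1])
  · exact (((cont_aux n (m+1)).add (continuousOn_const.mul (cont_aux n m))).intervalIntegrable)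

lemma c_base (n : ℕ) : ∫ t in (0:ℝ)..1, (1+t)^n = (2^(n+1) - 1) / ((n:ℝ)+1) := by
  have key := intervalIntegral.integral_eq_sub_of_hasDerivAt
    (f := fun t : ℝ => (1+t)^(n+1) / ((n:ℝ)+1))
    (f' := fun t : ℝ => (1+t)^n) (a := 0) (b := 1) ?_ ?_
  · rw [key]; push_cast; ring
  · intro t _
    have h1 : HasDerivAt (fun t : ℝ => (1+t)^(n+1)) (((n:ℝ)+1) * (1+t)^n) t := by
      have := ((hasDerivAt_id t).const_add 1).fun_pow (n+1)
      simpa [Nat.add_sub_cancel, mul_comm] using this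
    have := h1.div_const (((n:ℝ)+1))
    have hn : ((n:ℝ)+1) ≠ 0 := by positivity
    field_simp at this
    convert this using 1
  · exact (Continuous.intervalIntegrable (by continuity) 0 1)

lemma c_closed (m n : ℕ) :
    ∫ t in (0:ℝ)..1, (1+t)^n * Real.log (1+t)^m
      = (∑ j ∈ Finset.range (m+1), (-1:ℝ)^(m-j) * ((m.factorial : ℝ)/(j.factorial : ℝ))
            * 2^(n+1) * Real.log 2 ^ j / ((n:ℝ)+1)^(m+1-j))
        - (-1:ℝ)^m * (m.factorial:ℝ) / ((n:ℝ)+1)^(m+1) := by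
  induction m with
  | zero =>
    rw [Finset.sum_range_one]
    simp only [pow_zero, mul_one, Nat.sub_zero, Nat.factorial_zero, Nat.cast_one, pow_one]
    rw [c_base n]
    field_simp
    ring
  | succ m ih =>
    rw [c_rec n m, Finset.sum_range_succ, ih]
    have e1 : m + 1 - (m+1) = 0 := by omega
    have e2 : m + 1 + 1 - (m+1) = 1 := by omega
    rw [e1, e2]
    have hfac : ((m+1).factorial : ℝ) ≠ 0 := by positivity
    rw [show (-1:ℝ)^(0:ℕ) * (((m+1).factorial : ℝ)/((m+1).factorial : ℝ))
        * 2^(n+1) * Real.log 2 ^ (m+1) / ((n:ℝ)+1)^(1:ℕ)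
        = 2^(n+1) * Real.log 2^(m+1) / ((n:ℝ)+1) by
      rw [div_self hfac]; ring]
    have hsum : ∑ j ∈ Finset.range (m+1), (-1:ℝ)^(m+1-j) * (((m+1).factorial : ℝ)/(j.factorial : ℝ))
            * 2^(n+1) * Real.log 2 ^ j / ((n:ℝ)+1)^(m+1+1-j)
        = -(((m:ℝ)+1)/((n:ℝ)+1)) * ∑ j ∈ Finset.range (m+1), (-1:ℝ)^(m-j) * ((m.factorial : ℝ)/(j.factorial : ℝ))
            * 2^(n+1) * Real.log 2 ^ j / ((n:ℝ)+1)^(m+1-j) := by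
      rw [Finset.mul_sum]
      refine Finset.sum_congr rfl (fun j hj => ?_)
      have hjm : j ≤ m := Nat.lt_succ_iff.mp (Finset.mem_range.mp hj)
      have h1 : m+1-j = (m-j)+1 := by omega
      have h2 : m+1+1-j = (m-j)+2 := by omega
      rw [h1, h2, Nat.factorial_succ]
      have hn : ((n:ℝ)+1) ≠ 0 := by positivity
      have hj0 : ((j.factorial : ℝ)) ≠ 0 := by positivity
      push_cast
      field_simp
      ring
    rw [hsum]
    have hn : ((n:ℝ)+1) ≠ 0 := by positivity
    push_cast [Nat.factorial_succ]
    rw [pow_succ ((n:ℝ)+1) (m+1)]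
    generalize ((n:ℝ)+1)^(m+1) = P
    generalize ((n:ℝ)+1) = x
    ring

lemma intA (m : ℕ) : ∫ t in (0:ℝ)..1, Real.log (1+t)^m / (1+t)
    = Real.log 2^(m+1) / ((m:ℝ)+1) := by
  have key := intervalIntegral.integral_eq_sub_of_hasDerivAt
    (f := fun t : ℝ => Real.log (1+t)^(m+1) / ((m:ℝ)+1))
    (f' := fun t : ℝ => Real.log (1+t)^m / (1+t)) (a := 0) (b := 1) ?_ ?_
  · rw [key]; norm_num
  · intro t ht
    rw [Set.uIcc_of_le (by norm_num)] at ht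
    have ht' : (0:ℝ) < 1 + t := by linarith [ht.1]
    have hl : HasDerivAt (fun t : ℝ => Real.log (1+t)) (1/(1+t)) t := by
      simpa using (((hasDerivAt_id t).const_add 1).log ht'.ne')
    have := (hl.fun_pow (m+1)).div_const ((m:ℝ)+1)
    have hm : ((m:ℝ)+1) ≠ 0 := by positivity
    refine this.congr_deriv ?_
    push_cast
    field_simp
  · apply ContinuousOn.intervalIntegrable
    apply ContinuousOn.div
    · exact ((cont_aux 0 m).congr (fun x _ => by simp))
    · exact Continuous.continuousOn (by continuity)
    · intro x hx
      rw [Set.uIcc_of_le (by norm_num : (0:ℝ) ≤ 1)] at hx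
      intro h; linarith [hx.1, h]

noncomputable def hfun (m n : ℕ) (t : ℝ) : ℝ := ((1+t)^n * Real.log (1+t)^m) / (2^(n+1) * ((n:ℝ)+1))

lemma hfun_contOn (m n : ℕ) : ContinuousOn (hfun m n) (Set.uIcc 0 1) :=
  (cont_aux n m).div_const _

lemma hfun_integrableOn (m n : ℕ) : MeasureTheory.IntegrableOn (hfun m n) (Set.Ioc 0 1) MeasureTheory.volume := by
  have hc : ContinuousOn (hfun m n) (Set.Icc 0 1) := by
    have := hfun_contOn m n
    rwa [Set.uIcc_of_le (by norm_num : (0:ℝ) ≤ 1)] at this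
  exact (hc.integrableOn_Icc (μ := MeasureTheory.volume)).mono_set Set.Ioc_subset_Icc_self

lemma hfun_nonneg (m n : ℕ) {t : ℝ} (ht : 0 ≤ t) : 0 ≤ hfun m n t := by
  unfold hfun
  apply div_nonneg
  · exact mul_nonneg (pow_nonneg (by linarith) _) (pow_nonneg (Real.log_nonneg (by linarith)) _)
  · positivity

lemma hfun_setIntegral (m n : ℕ) :
    ∫ t in Set.Ioc (0:ℝ) 1, hfun m n t
      = ((∑ j ∈ Finset.range (m+1), (-1:ℝ)^(m-j) * ((m.factorial : ℝ)/(j.factorial : ℝ))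
            * 2^(n+1) * Real.log 2 ^ j / ((n:ℝ)+1)^(m+1-j))
        - (-1:ℝ)^m * (m.factorial:ℝ) / ((n:ℝ)+1)^(m+1)) / (2^(n+1) * ((n:ℝ)+1)) := by
  rw [← intervalIntegral.integral_of_le (by norm_num : (0:ℝ) ≤ 1)]
  unfold hfun
  rw [intervalIntegral.integral_div, c_closed m n]

lemma hfun_hasSum_pt (m : ℕ) {t : ℝ} (ht : t ∈ Set.Ioo (0:ℝ) 1) :
    HasSum (fun n => hfun m n t)
      (Real.log (1+t)^m * (Real.log 2 - Real.log (1-t)) / (1+t)) := by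
  obtain ⟨ht0, ht1⟩ := ht
  have hx : |(1+t)/2| < 1 := by rw [abs_of_pos (by linarith)]; linarith
  have hs := hasSum_pow_div_log_of_abs_lt_one hx
  have h1 : (1:ℝ) - (1+t)/2 = (1-t)/2 := by ring
  rw [h1, Real.log_div (by linarith) (by norm_num)] at hs
  have hs2 := hs.mul_left (Real.log (1+t)^m / (1+t))
  have hve : Real.log (1+t)^m / (1+t) * -(Real.log (1-t) - Real.log 2)
      = Real.log (1+t)^m * (Real.log 2 - Real.log (1-t)) / (1+t) := by ring
  rw [hve] at hs2
  have hfe : (fun n : ℕ => Real.log (1+t)^m / (1+t) * (((1+t)/2)^(n+1)/((n:ℝ)+1)))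
      = fun n => hfun m n t := by
    funext n
    unfold hfun
    rw [div_pow, pow_succ]
    have h3 : (1+t) ≠ 0 := by linarith
    field_simp
  rwa [hfe] at hs2

lemma rzeta_hasSum {s : ℕ} (hs : 2 ≤ s) :
    HasSum (fun n : ℕ => 1/((n:ℝ)+1)^s) (rzeta s) := by
  have h0 : Summable (fun n : ℕ => 1/(n:ℝ)^s) := summable_one_div_nat_pow.mpr (by omega)
  have h1 : Summable (fun n : ℕ => 1/((n:ℝ)+1)^s) := by
    have := (summable_nat_add_iff 1).mpr h0
    simpa using this
  exact h1.hasSum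

lemma polylog_hasSum (m : ℕ) :
    HasSum (fun n : ℕ => (1/2:ℝ)^(n+1)/((n:ℝ)+1)^(m+2)) (polylog (m+2) (1/2)) := by
  have hg : Summable (fun n : ℕ => (1/2:ℝ)^(n+1)) := by
    have h : Summable (fun n : ℕ => (1/2:ℝ)^n) :=
      summable_geometric_of_lt_one (by norm_num) (by norm_num)
    exact (summable_nat_add_iff 1).mpr h
  have hsum : Summable (fun n : ℕ => (1/2:ℝ)^(n+1)/((n:ℝ)+1)^(m+2)) := by
    refine Summable.of_nonneg_of_le (fun n => by positivity) (fun n => ?_) hg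
    refine div_le_self (by positivity) (one_le_pow₀ ?_)
    have : (0:ℝ) ≤ (n:ℝ) := Nat.cast_nonneg n
    linarith
  exact hsum.hasSum

lemma hasSum_B (m : ℕ) :
    HasSum (fun n => ∫ t in Set.Ioc (0:ℝ) 1, hfun m n t)
      ((∑ j ∈ Finset.range (m+1), (-1:ℝ)^(m-j) * ((m.factorial:ℝ)/(j.factorial:ℝ))
          * Real.log 2^j * rzeta (m+2-j))
        - (-1:ℝ)^m * (m.factorial:ℝ) * polylog (m+2) (1/2)) := by
  have H1 : HasSum (fun n : ℕ => ∑ j ∈ Finset.range (m+1),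
        ((-1:ℝ)^(m-j) * ((m.factorial:ℝ)/(j.factorial:ℝ)) * Real.log 2^j) * (1/((n:ℝ)+1)^(m+2-j)))
      (∑ j ∈ Finset.range (m+1),
        ((-1:ℝ)^(m-j) * ((m.factorial:ℝ)/(j.factorial:ℝ)) * Real.log 2^j) * rzeta (m+2-j)) := by
    apply hasSum_sum
    intro j hj
    exact (rzeta_hasSum (by have := Finset.mem_range.mp hj; omega)).mul_left _
  have H2 := (polylog_hasSum m).mul_left ((-1:ℝ)^m * (m.factorial:ℝ))
  have H := H1.sub H2
  convert H using 2 with n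
  case e'_3 => rfl
  · rw [hfun_setIntegral m n, sub_div, Finset.sum_div]
    congr 1
    · refine Finset.sum_congr rfl (fun j hj => ?_)
      have hjm : j ≤ m := Nat.lt_succ_iff.mp (Finset.mem_range.mp hj)
      have e : m+2-j = (m+1-j)+1 := by omega
      rw [e, pow_succ]
      have p1 : ((n:ℝ)+1) ≠ 0 := by positivity
      have p2 : ((n:ℝ)+1)^(m+1-j) ≠ 0 := by positivity
      have p3 : (2:ℝ)^(n+1) ≠ 0 := by positivity
      field_simp
      ring
    · have p1 : ((n:ℝ)+1) ≠ 0 := by positivity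
      have p3 : (2:ℝ)^(n+1) ≠ 0 := by positivity
      rw [div_pow, pow_succ (((n:ℝ)+1)) (m+1)]
      field_simp
      ring

open MeasureTheory in
lemma integral_eval (m : ℕ) :
    ∫ t in (0:ℝ)..1, Real.log (1+t)^m * Real.log (1-t) / (1+t)
      = Real.log 2^(m+2)/((m:ℝ)+1)
        - (∑ j ∈ Finset.range (m+1),
            (-1:ℝ)^(m-j) * ((m.factorial:ℝ)/(j.factorial:ℝ)) * Real.log 2^j * rzeta (m+2-j))
        + (-1:ℝ)^m * (m.factorial:ℝ) * polylog (m+2) (1/2) := by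
  set μ : Measure ℝ := volume.restrict (Set.Ioc 0 1) with hμ
  set Tdef : ℝ → ℝ := fun t => Real.log (1+t)^m * (Real.log 2 - Real.log (1-t)) / (1+t) with hT
  set A : ℝ → ℝ := fun t => Real.log 2 * (Real.log (1+t)^m / (1+t)) with hA
  -- ae facts
  have hae : ∀ᵐ t ∂μ, t ∈ Set.Ioo (0:ℝ) 1 := by
    rw [hμ, ← Measure.restrict_congr_set Ioo_ae_eq_Ioc]
    exact ae_restrict_mem measurableSet_Ioo
  -- measurability of Tdef
  have hTmeas : Measurable Tdef := by
    apply Measurable.div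
    · apply Measurable.mul
      · exact (Real.measurable_log.comp (measurable_const.add measurable_id)).pow_const m
      · exact measurable_const.sub (Real.measurable_log.comp (measurable_const.sub measurable_id))
    · exact measurable_const.add measurable_id
  -- Tdef nonneg on Ioc
  have hTnn : ∀ t ∈ Set.Ioc (0:ℝ) 1, 0 ≤ Tdef t := by
    intro t ht
    obtain ⟨ht0, ht1⟩ := ht
    apply div_nonneg _ (by linarith)
    apply mul_nonneg (pow_nonneg (Real.log_nonneg (by linarith)) _)
    have h1 : Real.log (1-t) ≤ 0 := Real.log_nonpos (by linarith) (by linarith)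
    have h2 : (0:ℝ) ≤ Real.log 2 := Real.log_nonneg (by norm_num)
    linarith
  have hTnn' : 0 ≤ᵐ[μ] Tdef := (ae_restrict_mem measurableSet_Ioc).mono hTnn
  -- tsum equality on Ioo
  have htsum : ∀ᵐ t ∂μ, (∑' n, hfun m n t) = Tdef t := by
    filter_upwards [hae] with t ht
    exact (hfun_hasSum_pt m ht).tsum_eq
  -- Integrability of Tdef
  have hTint : Integrable Tdef μ := by
    constructor
    · exact hTmeas.aestronglyMeasurable
    · rw [hasFiniteIntegral_iff_ofReal hTnn']
      have key : ∫⁻ t, ENNReal.ofReal (Tdef t) ∂μ = ∑' n, ∫⁻ t, ENNReal.ofReal (hfun m n t) ∂μ := by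
        rw [← lintegral_tsum (fun n => by
          apply Measurable.aemeasurable
          apply Measurable.ennreal_ofReal
          unfold hfun
          apply Measurable.div
          · exact ((measurable_const.add measurable_id).pow_const n).mul
              ((Real.measurable_log.comp (measurable_const.add measurable_id)).pow_const m)
          · exact measurable_const)]
        apply lintegral_congr_ae
        filter_upwards [hae] with t ht
        rw [show Tdef t = Real.log (1+t)^m * (Real.log 2 - Real.log (1-t)) / (1+t) from rfl,
          ← (hfun_hasSum_pt m ht).tsum_eq,
          ENNReal.ofReal_tsum_of_nonneg (fun n => hfun_nonneg m n (le_of_lt ht.1))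
            (hfun_hasSum_pt m ht).summable]
      rw [key]
      have keyn : ∀ n : ℕ, ∫⁻ t, ENNReal.ofReal (hfun m n t) ∂μ
          = ENNReal.ofReal (∫ t, hfun m n t ∂μ) := by
        intro n
        rw [← ofReal_integral_eq_lintegral_ofReal (hfun_integrableOn m n)
          (((ae_restrict_mem measurableSet_Ioc).mono (fun t ht => hfun_nonneg m n (le_of_lt ht.1))))]
      simp_rw [keyn]
      rw [← ENNReal.ofReal_tsum_of_nonneg
        (fun n => integral_nonneg_of_ae (((ae_restrict_mem measurableSet_Ioc).mono
          (fun t ht => hfun_nonneg m n (le_of_lt ht.1)))))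
        (hasSum_B m).summable]
      exact ENNReal.ofReal_lt_top
  -- Integrability of A
  have hAint : Integrable A μ := by
    have hc : ContinuousOn A (Set.Icc 0 1) := by
      apply ContinuousOn.mul continuousOn_const
      apply ContinuousOn.div
      · exact ((cont_aux 0 m).congr (fun x _ => by simp)).mono
          (by rw [Set.uIcc_of_le (by norm_num : (0:ℝ) ≤ 1)])
      · exact Continuous.continuousOn (by continuity)
      · intro x hx; intro h; have := hx.1; simp only [Set.mem_Icc] at hx; linarith [hx.1]
    exact (hc.integrableOn_Icc (μ := volume)).mono_set Set.Ioc_subset_Icc_self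
  -- integral of Tdef
  have hTval : ∫ t, Tdef t ∂μ
      = (∑ j ∈ Finset.range (m+1),
          (-1:ℝ)^(m-j) * ((m.factorial:ℝ)/(j.factorial:ℝ)) * Real.log 2^j * rzeta (m+2-j))
        - (-1:ℝ)^m * (m.factorial:ℝ) * polylog (m+2) (1/2) := by
    have hnorm : ∀ n : ℕ, ∫ t, ‖hfun m n t‖ ∂μ = ∫ t, hfun m n t ∂μ := by
      intro n
      apply MeasureTheory.integral_congr_ae
      filter_upwards [(ae_restrict_mem measurableSet_Ioc (μ := volume) (s := Set.Ioc (0:ℝ) 1))]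
        with t ht
      exact Real.norm_of_nonneg (hfun_nonneg m n (le_of_lt ht.1))
    have hsummable : Summable (fun n => ∫ t, ‖hfun m n t‖ ∂μ) := by
      simp_rw [hnorm]; exact (hasSum_B m).summable
    have := integral_tsum_of_summable_integral_norm (fun n => hfun_integrableOn m n) hsummable
    rw [← integral_congr_ae htsum, ← this, (hasSum_B m).tsum_eq]
  -- integral of A
  have hAval : ∫ t, A t ∂μ = Real.log 2^(m+2)/((m:ℝ)+1) := by
    rw [hμ, ← intervalIntegral.integral_of_le (by norm_num : (0:ℝ) ≤ 1),
      intervalIntegral.integral_const_mul, intA m]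
    rw [pow_succ]
    ring
  -- final assembly
  have hsplit : (fun t => Real.log (1+t)^m * Real.log (1-t) / (1+t)) = fun t => A t - Tdef t := by
    funext t
    rw [hA, hT]
    ring
  rw [intervalIntegral.integral_of_le (by norm_num : (0:ℝ) ≤ 1)]
  show ∫ t, Real.log (1+t)^m * Real.log (1-t) / (1+t) ∂μ = _
  rw [hsplit]
  rw [integral_sub hAint hTint, hAval, hTval]
  ring

lemma zeta_reflect (m : ℕ) :
    ∑ j ∈ Finset.range (m+1),
        (-1:ℝ)^(m-j) * ((m.factorial:ℝ)/(j.factorial:ℝ)) * Real.log 2^j * rzeta (m+2-j)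
      = ∑ k ∈ Finset.range (m+1),
        (-1:ℝ)^k * ((m.choose k : ℝ) * (k.factorial:ℝ)) * Real.log 2^(m-k) * rzeta (k+2) := by
  rw [← Finset.sum_range_reflect]
  refine Finset.sum_congr rfl (fun k hk => ?_)
  have hkm : k ≤ m := Nat.lt_succ_iff.mp (Finset.mem_range.mp hk)
  have e1 : m + 1 - 1 - k = m - k := by omega
  have e2 : m - (m - k) = k := by omega
  have e3 : m + 2 - (m - k) = k + 2 := by omega
  rw [e1, e2, e3]
  have hfac : ((m.factorial:ℝ)/((m-k).factorial:ℝ)) = (m.choose k : ℝ) * (k.factorial:ℝ) := by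
    have h := Nat.choose_mul_factorial_mul_factorial hkm
    have h' : ((m.choose k : ℝ)) * (k.factorial:ℝ) * ((m-k).factorial:ℝ) = (m.factorial:ℝ) := by
      exact_mod_cast congrArg (Nat.cast : ℕ → ℝ) h
    have hne : ((m-k).factorial:ℝ) ≠ 0 := by positivity
    field_simp
    linarith [h']
  rw [hfac]


lemma inner_binom (m l : ℕ) (hl : 1 ≤ l) (hlm : l ≤ m) :
    ∑ k ∈ Finset.Ico l (m+1), (-1:ℝ)^k * (m.choose k : ℝ) * (k.choose l : ℝ)
      = if l = m then (-1:ℝ)^m else 0 := by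
  rw [Finset.sum_Ico_eq_sum_range]
  have h1 : m + 1 - l = (m - l) + 1 := by omega
  rw [h1]
  have h2 : ∀ i ∈ Finset.range ((m-l)+1),
      (-1:ℝ)^(l+i) * (m.choose (l+i) : ℝ) * ((l+i).choose l : ℝ)
        = ((-1:ℝ)^l * (m.choose l : ℝ)) * ((-1:ℝ)^i * ((m-l).choose i : ℝ)) := by
    intro i hi
    have hi' : i ≤ m - l := Nat.lt_succ_iff.mp (Finset.mem_range.mp hi)
    have hc : m.choose (l+i) * (l+i).choose l = m.choose l * (m-l).choose i := by
      have := Nat.choose_mul (n := m) (k := l+i) (s := l) (by omega)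
      simpa using this
    have hc' : ((m.choose (l+i) : ℝ)) * ((l+i).choose l : ℝ) = (m.choose l : ℝ) * ((m-l).choose i : ℝ) := by
      exact_mod_cast congrArg (Nat.cast : ℕ → ℝ) hc
    rw [pow_add]
    calc (-1:ℝ)^l * (-1)^i * (m.choose (l+i) : ℝ) * ((l+i).choose l : ℝ)
        = (-1:ℝ)^l * (-1)^i * ((m.choose (l+i) : ℝ) * ((l+i).choose l : ℝ)) := by ring
      _ = (-1:ℝ)^l * (-1)^i * ((m.choose l : ℝ) * ((m-l).choose i : ℝ)) := by rw [hc']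
      _ = ((-1:ℝ)^l * (m.choose l : ℝ)) * ((-1:ℝ)^i * ((m-l).choose i : ℝ)) := by ring
  rw [Finset.sum_congr rfl h2, ← Finset.mul_sum]
  have h3 : ∑ i ∈ Finset.range ((m-l)+1), (-1:ℝ)^i * ((m-l).choose i : ℝ)
      = if m - l = 0 then 1 else 0 := by
    have := Int.alternating_sum_range_choose (n := m - l)
    have := congrArg (Int.cast : ℤ → ℝ) this
    push_cast at this
    exact this
  rw [h3]
  by_cases h : l = m
  · subst h; simp
  · rw [if_neg (by omega), if_neg h]; ring

lemma li_collapse (m : ℕ) (hm : 1 ≤ m) (a : ℝ) (P : ℕ → ℝ) :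
    ∑ k ∈ Finset.Icc 1 m, (-1:ℝ)^k * (m.choose k : ℝ) *
        (∑ l ∈ Finset.Icc 1 k, (l.factorial : ℝ) * (k.choose l : ℝ) * a^(m-l) * P l)
      = (-1:ℝ)^m * (m.factorial : ℝ) * P m := by
  have hIcc : ∀ n : ℕ, Finset.Icc 1 n = Finset.Ico 1 (n+1) := fun n => (Finset.Ico_add_one_right_eq_Icc 1 n).symm
  simp only [hIcc, Finset.mul_sum]
  rw [show (∑ k ∈ Finset.Ico 1 (m+1), ∑ l ∈ Finset.Ico 1 (k+1),
        (-1:ℝ)^k * (m.choose k : ℝ) * ((l.factorial : ℝ) * (k.choose l : ℝ) * a^(m-l) * P l))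
      = ∑ l ∈ Finset.Ico 1 (m+1), ∑ k ∈ Finset.Ico l (m+1),
        (-1:ℝ)^k * (m.choose k : ℝ) * ((l.factorial : ℝ) * (k.choose l : ℝ) * a^(m-l) * P l) from
    (Finset.sum_Ico_Ico_comm 1 (m+1) _).symm]
  have hterm : ∀ l ∈ Finset.Ico 1 (m+1),
      (∑ k ∈ Finset.Ico l (m+1),
        (-1:ℝ)^k * (m.choose k : ℝ) * ((l.factorial : ℝ) * (k.choose l : ℝ) * a^(m-l) * P l))
      = (if l = m then (-1:ℝ)^m else 0) * ((l.factorial : ℝ) * a^(m-l) * P l) := by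
    intro l hl
    obtain ⟨hl1, hl2⟩ := Finset.mem_Ico.mp hl
    rw [← inner_binom m l hl1 (by omega), Finset.sum_mul]
    refine Finset.sum_congr rfl (fun k _ => by ring)
  rw [Finset.sum_congr rfl hterm]
  rw [Finset.sum_eq_single m]
  · simp [mul_assoc]
  · intro b _ hb; rw [if_neg hb]; ring
  · intro h; exact absurd (Finset.mem_Ico.mpr ⟨hm, by omega⟩) h

lemma rhs_simp (m : ℕ) (hm : 1 ≤ m) (a : ℝ) (Z : ℕ → ℝ) (P : ℕ → ℝ) :
    (1 / ((m : ℝ) + 1)) * a ^ (m + 2) - Z 2 * a ^ m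
        - ∑ k ∈ Finset.Icc 1 m, (m.choose k : ℝ) * (-1) ^ (k + 1) *
            ((∑ l ∈ Finset.Icc 1 k, (l.factorial : ℝ) * (k.choose l : ℝ) * a ^ (m - l) * P l)
              - (k.factorial : ℝ) * a ^ (m - k) * Z (k + 2))
      = (1 / ((m : ℝ) + 1)) * a ^ (m + 2)
        - (∑ k ∈ Finset.range (m+1), (-1:ℝ)^k * ((m.choose k : ℝ) * (k.factorial : ℝ)) * a^(m-k) * Z (k+2))
        + (-1:ℝ)^m * (m.factorial : ℝ) * P m := by
  have hsplit : ∀ k ∈ Finset.Icc 1 m, (m.choose k : ℝ) * (-1) ^ (k + 1) *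
            ((∑ l ∈ Finset.Icc 1 k, (l.factorial : ℝ) * (k.choose l : ℝ) * a ^ (m - l) * P l)
              - (k.factorial : ℝ) * a ^ (m - k) * Z (k + 2))
      = -((-1:ℝ)^k * (m.choose k : ℝ) *
            (∑ l ∈ Finset.Icc 1 k, (l.factorial : ℝ) * (k.choose l : ℝ) * a ^ (m - l) * P l))
        + (-1:ℝ)^k * ((m.choose k : ℝ) * (k.factorial : ℝ)) * a^(m-k) * Z (k+2) := by
    intro k _
    rw [pow_succ]
    ring
  rw [Finset.sum_congr rfl hsplit, Finset.sum_add_distrib, Finset.sum_neg_distrib,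
    li_collapse m hm a P]
  have hzeta : Z 2 * a^m + ∑ k ∈ Finset.Icc 1 m,
        (-1:ℝ)^k * ((m.choose k : ℝ) * (k.factorial : ℝ)) * a^(m-k) * Z (k+2)
      = ∑ k ∈ Finset.range (m+1), (-1:ℝ)^k * ((m.choose k : ℝ) * (k.factorial : ℝ)) * a^(m-k) * Z (k+2) := by
    rw [Finset.sum_range_succ']
    have h0 : (-1:ℝ)^(0:ℕ) * ((m.choose 0 : ℝ) * ((0:ℕ).factorial : ℝ)) * a^(m-0) * Z (0+2)
        = Z 2 * a^m := by simp [mul_comm]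
    rw [h0]
    have : ∑ k ∈ Finset.Icc 1 m,
        (-1:ℝ)^k * ((m.choose k : ℝ) * (k.factorial : ℝ)) * a^(m-k) * Z (k+2)
      = ∑ i ∈ Finset.range m,
        (-1:ℝ)^(i+1) * ((m.choose (i+1) : ℝ) * ((i+1).factorial : ℝ)) * a^(m-(i+1)) * Z ((i+1)+2) := by
      rw [← Finset.Ico_add_one_right_eq_Icc, Finset.sum_Ico_eq_sum_range]
      norm_num
      exact Finset.sum_congr rfl (fun i _ => by rw [Nat.add_comm 1 i])
    rw [this]
    ring
  linarith [hzeta]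

lemma rhs_simp' (m : ℕ) (hm : 1 ≤ m) :
    (1 / ((m : ℝ) + 1)) * Real.log 2 ^ (m + 2) - rzeta 2 * Real.log 2 ^ m
        - ∑ k ∈ Finset.Icc 1 m, (m.choose k : ℝ) * (-1) ^ (k + 1) *
            ((∑ l ∈ Finset.Icc 1 k, (l.factorial : ℝ) * (k.choose l : ℝ) *
                Real.log 2 ^ (m - l) * polylog (l + 2) (1 / 2))
              - (k.factorial : ℝ) * Real.log 2 ^ (m - k) * rzeta (k + 2))
      = (1 / ((m : ℝ) + 1)) * Real.log 2 ^ (m + 2)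
        - (∑ k ∈ Finset.range (m+1), (-1:ℝ)^k * ((m.choose k : ℝ) * (k.factorial : ℝ))
            * Real.log 2^(m-k) * rzeta (k+2))
        + (-1:ℝ)^m * (m.factorial : ℝ) * polylog (m+2) (1/2) :=
  rhs_simp m hm (Real.log 2) rzeta (fun l => polylog (l+2) (1/2))

end Aux

theorem stmt2 (m : ℕ) (hm : 1 ≤ m) :
    ∫ t in (0:ℝ)..1, Real.log (1 + t) ^ m * Real.log (1 - t) / (1 + t) =
      (1 / ((m : ℝ) + 1)) * Real.log 2 ^ (m + 2) - rzeta 2 * Real.log 2 ^ m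
        - ∑ k ∈ Finset.Icc 1 m, (m.choose k : ℝ) * (-1) ^ (k + 1) *
            ((∑ l ∈ Finset.Icc 1 k, (l.factorial : ℝ) * (k.choose l : ℝ) *
                Real.log 2 ^ (m - l) * polylog (l + 2) (1 / 2))
              - (k.factorial : ℝ) * Real.log 2 ^ (m - k) * rzeta (k + 2)) := by
  rw [integral_eval m, rhs_simp' m hm, zeta_reflect m]
  ring
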